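/- For every n ≥ 1, Θ(Cube(n, n−1)) is homotopy equivalent to the sphere S^{n−1}. -/

import Mathlib

/-- A hypergraph on vertex type `V` is given by its set `H` of hyperedges
(subsets of `V`).  The theta complex `Θ(𝓗)` has as simplices the nonempty
finite subsets of `V` that are disjoint from at least one hyperedge. -/
def thetaComplex {V : Type*} (H : Set (Set V)) : Set (Finset V) :=
  {σ : Finset V | σ.Nonempty ∧ ∃ h ∈ H, ∀ v ∈ σ, v ∉ h}

/-- The geometric realization of a complex `K` of finite subsets of `V`:
convex combinations of vertices supported on a simplex of `K`, topologized as a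
subspace of `V → ℝ`. -/
def geomReal {V : Type*} (K : Set (Finset V)) : Set (V → ℝ) :=
  {f | (∀ v, 0 ≤ f v) ∧ ∃ σ ∈ K, (∀ v, f v ≠ 0 → v ∈ σ) ∧ ∑ v ∈ σ, f v = 1}

/-- The unit sphere in `ℝ^d`, i.e. the sphere `S^{d-1}` (empty when `d = 0`). -/
def sphereSpace (d : ℕ) : Set (EuclideanSpace ℝ (Fin d)) := Metric.sphere 0 1

/-- A base point on the unit sphere in `ℝ^d`, `d > 0`. -/
noncomputable def spherePt (d : ℕ) (hd : 0 < d) : ↥(sphereSpace d) :=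
  ⟨EuclideanSpace.single (⟨0, hd⟩ : Fin d) 1, by
    simp [sphereSpace, EuclideanSpace.norm_single]⟩

/-- The hypergraph `Cube(n,k)`: vertices are the vertices `{0,1}^n` of the
`n`-cube, and hyperedges are the vertex sets of the `k`-dimensional faces,
i.e. the subsets obtained by fixing `n - k` of the coordinates. -/
def cubeEdges (n k : ℕ) : Set (Set (Fin n → Bool)) :=
  {e | ∃ (s : Finset (Fin n)) (g : Fin n → Bool),
    s.card = n - k ∧ e = {f | ∀ i ∈ s, f i = g i}}

open Finset

namespace ThetaCube

noncomputable def eps (b : Bool) : ℝ := if b then 1 else -1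

lemma eps_abs (b : Bool) : |eps b| = 1 := by cases b <;> simp [eps]

lemma eps_sq (b : Bool) : eps b * eps b = 1 := by cases b <;> norm_num [eps]

lemma eps_ne (b c : Bool) (h : b ≠ c) : eps b = -eps c := by
  cases b <;> cases c <;> simp_all [eps]

variable {n : ℕ}

/-- barycenter map -/
noncomputable def bary (n : ℕ) (f : (Fin n → Bool) → ℝ) : Fin n → ℝ :=
  fun i => ∑ v : Fin n → Bool, f v * eps (v i)

/-- product weights -/
noncomputable def wfun (n : ℕ) (x : Fin n → ℝ) : (Fin n → Bool) → ℝ :=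
  fun v => ∏ i, (1 + eps (v i) * x i) / 2

lemma sum_prod_bool (c : Fin n → Bool → ℝ) :
    ∑ v : Fin n → Bool, ∏ i, c i (v i) = ∏ i, (c i true + c i false) := by
  rw [← Fintype.piFinset_univ, ← Finset.prod_univ_sum]
  simp [Fintype.sum_bool]

lemma sum_wfun (x : Fin n → ℝ) : ∑ v : Fin n → Bool, wfun n x v = 1 := by
  unfold wfun
  rw [sum_prod_bool (fun i b => (1 + eps b * x i) / 2)]
  rw [Finset.prod_congr rfl (fun i _ => ?_), Finset.prod_const_one]
  simp [eps]; ring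

lemma wfun_nonneg (x : Fin n → ℝ) (hx : ∀ j, |x j| ≤ 1) (v : Fin n → Bool) :
    0 ≤ wfun n x v := by
  apply Finset.prod_nonneg
  intro i _
  have h := abs_le.mp (hx i)
  cases hvi : v i <;> simp [eps] <;> nlinarith [h.1, h.2]

lemma bary_wfun (x : Fin n → ℝ) : bary n (wfun n x) = x := by
  funext i
  unfold bary wfun
  have key : ∀ v : Fin n → Bool,
      (∏ j, (1 + eps (v j) * x j) / 2) * eps (v i)
        = ∏ j, ((1 + eps (v j) * x j) / 2 * (if j = i then eps (v j) else 1)) := by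
    intro v
    rw [Finset.prod_mul_distrib, Finset.prod_ite_eq' Finset.univ i (fun j => eps (v j))]
    simp
  rw [Finset.sum_congr rfl (fun v _ => key v)]
  rw [sum_prod_bool (fun j b => (1 + eps b * x j) / 2 * (if j = i then eps b else 1))]
  have : ∀ j, ((1 + eps true * x j) / 2 * (if j = i then eps true else 1)
      + (1 + eps false * x j) / 2 * (if j = i then eps false else 1))
      = if j = i then x j else 1 := by
    intro j
    by_cases h : j = i <;> simp [h, eps] <;> ring
  rw [Finset.prod_congr rfl (fun j _ => this j)]
  rw [Finset.prod_ite_eq' Finset.univ i (fun j => x j)]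
  simp

/-- the facet finset -/
def facet (i : Fin n) (b : Bool) : Finset (Fin n → Bool) :=
  Finset.univ.filter (fun v => v i = b)

lemma facet_mem_theta (hn : 1 ≤ n) (i : Fin n) (b : Bool) :
    facet i b ∈ thetaComplex (cubeEdges n (n - 1)) := by
  constructor
  · exact ⟨fun _ => b, by simp [facet]⟩
  · refine ⟨{v | v i = !b}, ⟨{i}, fun _ => !b, ?_, ?_⟩, ?_⟩
    · simp [Nat.sub_sub_self hn]
    · ext v; simp
    · intro v hv
      simp [facet] at hv
      simp [hv]

/-- every simplex of the theta complex is contained in a facet -/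
lemma theta_subset_facet (hn : 1 ≤ n) {σ : Finset (Fin n → Bool)}
    (hσ : σ ∈ thetaComplex (cubeEdges n (n - 1))) :
    ∃ i b, ∀ v ∈ σ, v i = b := by
  obtain ⟨-, h, ⟨s, g, hcard, rfl⟩, hdisj⟩ := hσ
  rw [Nat.sub_sub_self hn] at hcard
  obtain ⟨i, rfl⟩ := Finset.card_eq_one.mp hcard
  refine ⟨i, !(g i), fun v hv => ?_⟩
  have h2 := hdisj v hv
  simp only [Set.mem_setOf_eq, Finset.mem_singleton, forall_eq] at h2
  cases hgi : g i <;> cases hvi : v i <;> simp_all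

lemma exists_facet_support (hn : 1 ≤ n) {f : (Fin n → Bool) → ℝ}
    (hf : f ∈ geomReal (thetaComplex (cubeEdges n (n - 1)))) :
    ∃ i b, ∀ v, f v ≠ 0 → v i = b := by
  obtain ⟨-, σ, hσ, hsupp, -⟩ := hf
  obtain ⟨i, b, hib⟩ := theta_subset_facet hn hσ
  exact ⟨i, b, fun v hv => hib v (hsupp v hv)⟩

lemma sum_univ_eq_one {f : (Fin n → Bool) → ℝ}
    (hf : f ∈ geomReal (thetaComplex (cubeEdges n (n - 1)))) :
    ∑ v : Fin n → Bool, f v = 1 := by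
  obtain ⟨-, σ, -, hsupp, hsum⟩ := hf
  rw [← hsum]
  exact (Finset.sum_subset (Finset.subset_univ σ)
    (fun v _ hv => by by_contra h; exact hv (hsupp v h))).symm

lemma bary_abs_le {f : (Fin n → Bool) → ℝ}
    (hf : f ∈ geomReal (thetaComplex (cubeEdges n (n - 1)))) (j : Fin n) :
    |bary n f j| ≤ 1 := by
  unfold bary
  calc |∑ v : Fin n → Bool, f v * eps (v j)|
      ≤ ∑ v : Fin n → Bool, |f v * eps (v j)| := Finset.abs_sum_le_sum_abs _ _
    _ = ∑ v : Fin n → Bool, f v := by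
        apply Finset.sum_congr rfl
        intro v _
        rw [abs_mul, eps_abs, mul_one, abs_of_nonneg (hf.1 v)]
    _ = 1 := sum_univ_eq_one hf

lemma bary_eq_eps {f : (Fin n → Bool) → ℝ}
    (hf : f ∈ geomReal (thetaComplex (cubeEdges n (n - 1))))
    {i : Fin n} {b : Bool} (hib : ∀ v, f v ≠ 0 → v i = b) :
    bary n f i = eps b := by
  unfold bary
  have h1 : ∀ v : Fin n → Bool, f v * eps (v i) = f v * eps b := by
    intro v
    by_cases h : f v = 0
    · simp [h]
    · rw [hib v h]
  rw [Finset.sum_congr rfl (fun v _ => h1 v), ← Finset.sum_mul,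
    sum_univ_eq_one hf, one_mul]

/-- support of wfun at a coordinate with |x i| = 1 -/
lemma wfun_support {x : Fin n → ℝ} {i : Fin n} {b : Bool} (hxi : x i = eps b)
    (v : Fin n → Bool) (hv : wfun n x v ≠ 0) : v i = b := by
  by_contra h
  apply hv
  unfold wfun
  apply Finset.prod_eq_zero (Finset.mem_univ i)
  rw [hxi, eps_ne (v i) b h]
  have := eps_sq b
  field_simp
  linarith

lemma sum_facet {g : (Fin n → Bool) → ℝ} {i : Fin n} {b : Bool}
    (hsupp : ∀ v, g v ≠ 0 → v i = b) :
    ∑ v ∈ facet i b, g v = ∑ v : Fin n → Bool, g v :=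
  Finset.sum_subset (Finset.subset_univ _)
    (fun v _ hv => by
      by_contra h
      exact hv (by simp [facet, hsupp v h]))

/-- wfun lands in the geometric realization -/
lemma wfun_mem (hn : 1 ≤ n) (x : Fin n → ℝ) (hx : ∀ j, |x j| ≤ 1)
    (i : Fin n) (b : Bool) (hxi : x i = eps b) :
    wfun n x ∈ geomReal (thetaComplex (cubeEdges n (n - 1))) := by
  refine ⟨wfun_nonneg x hx, facet i b, facet_mem_theta hn i b, ?_, ?_⟩
  · intro v hv
    simp [facet, wfun_support hxi v hv]
  · rw [sum_facet (wfun_support hxi), sum_wfun]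


/-! ### sup norm facts -/

noncomputable def msup (n : ℕ) (x : Fin n → ℝ) : ℝ := ‖x‖

lemma exists_abs_eq_msup (hn : 1 ≤ n) (x : Fin n → ℝ) : ∃ i, |x i| = msup n x := by
  have : Nonempty (Fin n) := ⟨⟨0, hn⟩⟩
  obtain ⟨i, -, hi⟩ := Finset.exists_mem_eq_sup (univ : Finset (Fin n))
    univ_nonempty (fun i => ‖x i‖₊)
  refine ⟨i, ?_⟩
  rw [msup, Pi.norm_def, hi]
  simp [Real.nnnorm_abs, Real.norm_eq_abs]

lemma abs_le_msup (x : Fin n → ℝ) (j : Fin n) : |x j| ≤ msup n x := by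
  simpa [msup, Real.norm_eq_abs] using norm_le_pi_norm x j

lemma msup_le_one {x : Fin n → ℝ} (h : ∀ j, |x j| ≤ 1) : msup n x ≤ 1 := by
  rw [msup]
  apply pi_norm_le_iff_of_nonneg zero_le_one |>.mpr
  simpa [Real.norm_eq_abs] using h

lemma msup_smul (c : ℝ) (x : Fin n → ℝ) : msup n (c • x) = |c| * msup n x := by
  rw [msup, msup, norm_smul, Real.norm_eq_abs]

lemma msup_pos {x : Fin n → ℝ} (hx : x ≠ 0) : 0 < msup n x := norm_pos_iff.mpr hx

lemma msup_bary_eq_one (hn : 1 ≤ n) {f : (Fin n → Bool) → ℝ}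
    (hf : f ∈ geomReal (thetaComplex (cubeEdges n (n - 1)))) :
    msup n (bary n f) = 1 := by
  obtain ⟨i, b, hib⟩ := exists_facet_support hn hf
  refine le_antisymm (msup_le_one (bary_abs_le hf)) ?_
  have h1 := abs_le_msup (bary n f) i
  rwa [bary_eq_eps hf hib, eps_abs] at h1

lemma bary_ne_zero (hn : 1 ≤ n) {f : (Fin n → Bool) → ℝ}
    (hf : f ∈ geomReal (thetaComplex (cubeEdges n (n - 1)))) :
    bary n f ≠ 0 := by
  intro h
  have := msup_bary_eq_one hn hf
  rw [h, msup, norm_zero] at this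
  norm_num at this

/-! ### the two maps -/

/-- the pi type as Euclidean space -/
noncomputable def toEuc (n : ℕ) (x : Fin n → ℝ) : EuclideanSpace ℝ (Fin n) :=
  (WithLp.equiv 2 (Fin n → ℝ)).symm x

lemma toEuc_smul (c : ℝ) (x : Fin n → ℝ) : toEuc n (c • x) = c • toEuc n x := rfl

lemma norm_toEuc_ne (hn : 1 ≤ n) {f : (Fin n → Bool) → ℝ}
    (hf : f ∈ geomReal (thetaComplex (cubeEdges n (n - 1)))) :
    ‖toEuc n (bary n f)‖ ≠ 0 := by
  rw [norm_ne_zero_iff]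
  exact fun h => bary_ne_zero hn hf (by simpa [toEuc] using congrArg (WithLp.equiv 2 (Fin n → ℝ)) h)

abbrev XR (n : ℕ) := ↥(geomReal (thetaComplex (cubeEdges n (n - 1))))
abbrev SP (n : ℕ) := ↥(sphereSpace n)

lemma mem_sphere_norm {y : EuclideanSpace ℝ (Fin n)} (hy : y ∈ sphereSpace n) :
    ‖y‖ = 1 := by
  rwa [sphereSpace, Metric.mem_sphere, dist_zero_right] at hy

lemma bary_continuous : Continuous fun f : XR n => bary n f.1 := by
  unfold bary
  exact continuous_pi fun i => continuous_finset_sum _ fun v _ =>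
    ((continuous_apply v).comp continuous_subtype_val).mul continuous_const

/-- the projection map realization → sphere -/
noncomputable def pmap (n : ℕ) (hn : 1 ≤ n) : C(XR n, SP n) where
  toFun f := ⟨‖toEuc n (bary n f.1)‖⁻¹ • toEuc n (bary n f.1), by
    have hne := norm_toEuc_ne hn f.2
    rw [sphereSpace, Metric.mem_sphere, dist_zero_right, norm_smul,
      Real.norm_eq_abs, abs_of_nonneg (inv_nonneg.mpr (norm_nonneg _)),
      inv_mul_cancel₀ hne]⟩
  continuous_toFun := by
    have hbe : Continuous fun f : XR n => toEuc n (bary n f.1) :=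
      (PiLp.continuous_toLp 2 _).comp bary_continuous
    exact Continuous.subtype_mk
      ((hbe.norm.inv₀ fun f => norm_toEuc_ne hn f.2).smul hbe) _

/-- scale to sup-norm 1 -/
noncomputable def scaled (n : ℕ) (x : Fin n → ℝ) : Fin n → ℝ := (msup n x)⁻¹ • x

lemma sphere_ne_zero {y : EuclideanSpace ℝ (Fin n)} (hy : y ∈ sphereSpace n) :
    (WithLp.equiv 2 (Fin n → ℝ)) y ≠ 0 := by
  intro h
  have h2 : y = 0 := by simpa using congrArg (WithLp.equiv 2 (Fin n → ℝ)).symm h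
  have h3 := mem_sphere_norm hy
  rw [h2, norm_zero] at h3
  norm_num at h3

lemma scaled_mem (hn : 1 ≤ n) {y : EuclideanSpace ℝ (Fin n)} (hy : y ∈ sphereSpace n) :
    wfun n (scaled n ((WithLp.equiv 2 (Fin n → ℝ)) y))
      ∈ geomReal (thetaComplex (cubeEdges n (n - 1))) := by
  set x0 := (WithLp.equiv 2 (Fin n → ℝ)) y with hx0def
  have hx0 : x0 ≠ 0 := sphere_ne_zero hy
  have hm : 0 < msup n x0 := msup_pos hx0
  have hbound : ∀ j, |scaled n x0 j| ≤ 1 := by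
    intro j
    have : |scaled n x0 j| = (msup n x0)⁻¹ * |x0 j| := by
      rw [scaled, Pi.smul_apply, smul_eq_mul, abs_mul, abs_of_nonneg (inv_nonneg.mpr hm.le)]
    rw [this]
    calc (msup n x0)⁻¹ * |x0 j| ≤ (msup n x0)⁻¹ * msup n x0 :=
          mul_le_mul_of_nonneg_left (abs_le_msup x0 j) (inv_nonneg.mpr hm.le)
      _ = 1 := inv_mul_cancel₀ hm.ne'
  obtain ⟨i, hi⟩ := exists_abs_eq_msup hn x0
  rcases (abs_eq hm.le).mp hi with h | h
  · refine wfun_mem hn _ hbound i true ?_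
    show (msup n x0)⁻¹ * x0 i = eps true
    rw [h, inv_mul_cancel₀ hm.ne']
    simp [eps]
  · refine wfun_mem hn _ hbound i false ?_
    show (msup n x0)⁻¹ * x0 i = eps false
    rw [h, eps]
    field_simp
    simp

/-- the section map sphere → realization -/
noncomputable def smap (n : ℕ) (hn : 1 ≤ n) : C(SP n, XR n) where
  toFun y := ⟨wfun n (scaled n ((WithLp.equiv 2 (Fin n → ℝ)) y.1)), scaled_mem hn y.2⟩
  continuous_toFun := by
    have hyv : Continuous fun y : SP n => (WithLp.equiv 2 (Fin n → ℝ)) y.1 :=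
      (PiLp.continuous_ofLp 2 _).comp continuous_subtype_val
    have hmne : ∀ y : SP n, msup n ((WithLp.equiv 2 (Fin n → ℝ)) y.1) ≠ 0 :=
      fun y => (msup_pos (sphere_ne_zero y.2)).ne'
    have hscale : Continuous fun y : SP n =>
        scaled n ((WithLp.equiv 2 (Fin n → ℝ)) y.1) := by
      unfold scaled
      exact (Continuous.inv₀ (by exact hyv.norm) hmne).smul hyv
    refine Continuous.subtype_mk ?_ _
    unfold wfun
    exact continuous_pi fun v => continuous_finset_prod _ fun i _ =>
      (continuous_const.add (continuous_const.mul ((continuous_apply i).comp hscale))).div_const 2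

lemma pmap_smap (hn : 1 ≤ n) : (pmap n hn).comp (smap n hn) = ContinuousMap.id _ := by
  apply ContinuousMap.ext
  intro y
  apply Subtype.ext
  show (‖toEuc n (bary n (wfun n (scaled n ((WithLp.equiv 2 (Fin n → ℝ)) y.1))))‖⁻¹ •
    toEuc n (bary n (wfun n (scaled n ((WithLp.equiv 2 (Fin n → ℝ)) y.1))))
      : EuclideanSpace ℝ (Fin n)) = y.1
  rw [bary_wfun]
  set x0 := (WithLp.equiv 2 (Fin n → ℝ)) y.1 with hx0def
  have hx0 : x0 ≠ 0 := sphere_ne_zero y.2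
  have hm : 0 < msup n x0 := msup_pos hx0
  have h1 : toEuc n (scaled n x0) = (msup n x0)⁻¹ • y.1 := by
    rw [scaled, toEuc_smul]
    rfl
  rw [h1, norm_smul, Real.norm_eq_abs, abs_of_nonneg (inv_nonneg.mpr hm.le),
    mem_sphere_norm y.2, mul_one, smul_smul, inv_inv, mul_inv_cancel₀ hm.ne', one_smul]

lemma smap_pmap (hn : 1 ≤ n) (f : XR n) :
    ((smap n hn).comp (pmap n hn) f).1 = wfun n (bary n f.1) := by
  show wfun n (scaled n ((WithLp.equiv 2 (Fin n → ℝ))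
    (‖toEuc n (bary n f.1)‖⁻¹ • toEuc n (bary n f.1)))) = _
  have hc : ((WithLp.equiv 2 (Fin n → ℝ))
      (‖toEuc n (bary n f.1)‖⁻¹ • toEuc n (bary n f.1))) =
      ‖toEuc n (bary n f.1)‖⁻¹ • bary n f.1 := rfl
  rw [hc, scaled, msup_smul, msup_bary_eq_one hn f.2, mul_one, abs_inv,
    abs_of_nonneg (norm_nonneg _), inv_inv, smul_smul,
    mul_inv_cancel₀ (norm_toEuc_ne hn f.2), one_smul]

lemma homotopy_mem (hn : 1 ≤ n) {f : (Fin n → Bool) → ℝ}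
    (hf : f ∈ geomReal (thetaComplex (cubeEdges n (n - 1))))
    {t : ℝ} (ht0 : 0 ≤ t) (ht1 : t ≤ 1) :
    (fun v => (1 - t) * wfun n (bary n f) v + t * f v)
      ∈ geomReal (thetaComplex (cubeEdges n (n - 1))) := by
  obtain ⟨i, b, hib⟩ := exists_facet_support hn hf
  have hbe : bary n f i = eps b := bary_eq_eps hf hib
  have hble := bary_abs_le hf
  refine ⟨fun v => add_nonneg (mul_nonneg (by linarith) (wfun_nonneg _ hble v))
      (mul_nonneg ht0 (hf.1 v)),
    facet i b, facet_mem_theta hn i b, ?_, ?_⟩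
  · intro v hv
    have hv' : (1 - t) * wfun n (bary n f) v + t * f v ≠ 0 := hv
    simp only [facet, Finset.mem_filter, Finset.mem_univ, true_and]
    by_contra h
    have h1 : wfun n (bary n f) v = 0 := by
      by_contra hw; exact h (wfun_support hbe v hw)
    have h2 : f v = 0 := by
      by_contra hw; exact h (hib v hw)
    rw [h1, h2] at hv'
    simp at hv' 
  · have hsupp : ∀ v, (1 - t) * wfun n (bary n f) v + t * f v ≠ 0 → v i = b := by
      intro v hv
      by_contra h
      have h1 : wfun n (bary n f) v = 0 := by
        by_contra hw; exact h (wfun_support hbe v hw)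
      have h2 : f v = 0 := by
        by_contra hw; exact h (hib v hw)
      rw [h1, h2] at hv
      simp at hv
    rw [sum_facet hsupp, Finset.sum_add_distrib, ← Finset.mul_sum, ← Finset.mul_sum,
      sum_wfun, sum_univ_eq_one hf]
    ring

/-- the straight line homotopy -/
noncomputable def lineHomotopy (n : ℕ) (hn : 1 ≤ n) :
    ContinuousMap.Homotopy ((smap n hn).comp (pmap n hn)) (ContinuousMap.id _) where
  toFun p := ⟨fun v => (1 - (p.1 : ℝ)) * wfun n (bary n p.2.1) v + (p.1 : ℝ) * p.2.1 v,
    homotopy_mem hn p.2.2 p.1.2.1 p.1.2.2⟩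
  continuous_toFun := by
    have ht : Continuous fun p : unitInterval × (XR n) => (p.1 : ℝ) :=
      continuous_subtype_val.comp continuous_fst
    have hb2 : Continuous fun p : unitInterval × (XR n) => bary n p.2.1 :=
      bary_continuous.comp continuous_snd
    refine Continuous.subtype_mk (continuous_pi fun v => ?_) _
    have hw : Continuous fun p : unitInterval × (XR n) => wfun n (bary n p.2.1) v := by
      unfold wfun
      exact continuous_finset_prod _ fun i _ =>
        (continuous_const.add (continuous_const.mul ((continuous_apply i).comp hb2))).div_const 2
    exact ((continuous_const.sub ht).mul hw).add
      (ht.mul ((continuous_apply v).comp (continuous_subtype_val.comp continuous_snd)))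
  map_zero_left f := by
    apply Subtype.ext
    rw [smap_pmap hn f]
    funext v
    norm_num
  map_one_left f := by
    apply Subtype.ext
    funext v
    norm_num

end ThetaCube

/-- For every `n ≥ 1`, `Θ(Cube(n, n-1))` is homotopy
equivalent to the sphere `S^{n-1}` (the unit sphere in `ℝⁿ`). -/
theorem theta_cube_codim_one (n : ℕ) (hn : 1 ≤ n) :
    Nonempty (ContinuousMap.HomotopyEquiv
      (↥(geomReal (thetaComplex (cubeEdges n (n - 1)))))
      (↥(sphereSpace n))) := by
  exact ⟨⟨ThetaCube.pmap n hn, ThetaCube.smap n hn,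
    ⟨ThetaCube.lineHomotopy n hn⟩,
    ThetaCube.pmap_smap hn ▸ ContinuousMap.Homotopic.refl _⟩⟩
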